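/- Let X be a real Banach space, (Ω, Σ, μ) a complete probability space, and W a weakly compact subset of X. Then L_∞(μ,W) = {g ∈ L_∞(μ,X) : g(s) ∈ W for a.e. s ∈ Ω} is proximinal in L_∞(μ,X): for every f ∈ L_∞(μ,X) there exists g_0 ∈ L_∞(μ,W) with ‖f − g_0‖_∞ ≤ ‖f − h‖_∞ for every h ∈ L_∞(μ,W), i.e. ‖f − g_0‖_∞ = dist(f, L_∞(μ,W)). -/

import Mathlib

open MeasureTheory Filter Topology Set Metric
open scoped ENNReal NNReal

section Helpers

variable {X : Type*} [NormedAddCommGroup X] [NormedSpace ℝ X]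

lemma aux_isClosed_weak_of_convex {s : Set X} (hs : Convex ℝ s) (hc : IsClosed s) :
    IsClosed (toWeakSpace ℝ X '' s) := by
  rw [← isOpen_compl_iff, isOpen_iff_mem_nhds]
  intro y hy
  have hx : (toWeakSpace ℝ X).symm y ∉ s := by
    intro h
    exact hy ⟨(toWeakSpace ℝ X).symm y, h, by simp⟩
  obtain ⟨φ, u, h1, h2⟩ := geometric_hahn_banach_closed_point hs hc hx
  have hcont : Continuous fun z : WeakSpace ℝ X => φ ((toWeakSpace ℝ X).symm z) :=
    WeakBilin.eval_continuous _ φ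
  have hyU : (fun z : WeakSpace ℝ X => φ ((toWeakSpace ℝ X).symm z)) y ∈ Set.Ioi u := h2
  refine Filter.mem_of_superset
    ((hcont.isOpen_preimage _ isOpen_Ioi).mem_nhds hyU) ?_
  rintro z hz ⟨v, hv, rfl⟩
  have : φ v < u := h1 v hv
  have : u < φ v := by simpa using hz
  linarith

/-- The convex hull of a countable set is separable. -/
lemma aux_isSeparable_convexHull {s : Set X} (hs : s.Countable) :
    TopologicalSpace.IsSeparable (convexHull ℝ s) := by
  have hcount : {t : Finset X | ↑t ⊆ s}.Countable := by
    have h2 := Set.countable_setOf_finite_subset hs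
    have : {t : Finset X | ↑t ⊆ s} = ((↑) : Finset X → Set X) ⁻¹' {u : Set X | u.Finite ∧ u ⊆ s} := by
      ext t; simp [Set.mem_setOf_eq, Finset.finite_toSet]
    rw [this]
    exact h2.preimage Finset.coe_injective
  have heq : convexHull ℝ s = ⋃ t ∈ {t : Finset X | ↑t ⊆ s}, convexHull ℝ (t : Set X) := by
    rw [convexHull_eq_union_convexHull_finite_subsets]
    ext x; simp [Set.mem_setOf_eq]
  rw [heq]
  haveI := hcount.to_subtype
  rw [Set.biUnion_eq_iUnion]
  exact TopologicalSpace.IsSeparable.iUnion fun t =>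
    ((t : Finset X).finite_toSet.isCompact_convexHull ℝ).isSeparable

end Helpers


section PDistX

section PDist

variable {X : Type*} [NormedAddCommGroup X] [NormedSpace ℝ X]

/-- An auxiliary pseudometric built from a sequence of functionals. -/
noncomputable def pdist (φ : ℕ → X →L[ℝ] ℝ) (v w : X) : ℝ :=
  ∑' n, (1/2 : ℝ)^n * min |φ n (v - w)| 1

lemma pdist_term_nonneg (φ : ℕ → X →L[ℝ] ℝ) (v w : X) (n : ℕ) :
    0 ≤ (1/2 : ℝ)^n * min |φ n (v - w)| 1 :=
  mul_nonneg (by positivity) (le_min (abs_nonneg _) zero_le_one)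

lemma pdist_term_le (φ : ℕ → X →L[ℝ] ℝ) (v w : X) (n : ℕ) :
    (1/2 : ℝ)^n * min |φ n (v - w)| 1 ≤ (1/2:ℝ)^n := by
  have h1 : min |φ n (v - w)| 1 ≤ 1 := min_le_right _ _
  have h2 : (0:ℝ) ≤ (1/2:ℝ)^n := by positivity
  calc (1/2 : ℝ)^n * min |φ n (v - w)| 1 ≤ (1/2:ℝ)^n * 1 := by nlinarith
    _ = (1/2:ℝ)^n := mul_one _

lemma pdist_summable (φ : ℕ → X →L[ℝ] ℝ) (v w : X) :
    Summable (fun n => (1/2 : ℝ)^n * min |φ n (v - w)| 1) :=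
  Summable.of_nonneg_of_le (pdist_term_nonneg φ v w) (pdist_term_le φ v w)
    (summable_geometric_of_lt_one (by norm_num) (by norm_num))

lemma pdist_nonneg (φ : ℕ → X →L[ℝ] ℝ) (v w : X) : 0 ≤ pdist φ v w :=
  tsum_nonneg (pdist_term_nonneg φ v w)

lemma pdist_symm (φ : ℕ → X →L[ℝ] ℝ) (v w : X) : pdist φ v w = pdist φ w v := by
  unfold pdist
  apply tsum_congr
  intro n
  have : |φ n (v - w)| = |φ n (w - v)| := by
    rw [map_sub, map_sub, abs_sub_comm]
  rw [this]

lemma pdist_le (φ : ℕ → X →L[ℝ] ℝ) (hφ : ∀ n, ‖φ n‖ ≤ 1) (v w : X) :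
    pdist φ v w ≤ 2 * ‖v - w‖ := by
  have h1 : ∀ n : ℕ, (1/2:ℝ)^n * min |φ n (v - w)| 1 ≤ (1/2:ℝ)^n * ‖v - w‖ := by
    intro n
    have h2 : (0:ℝ) ≤ (1/2:ℝ)^n := by positivity
    have h3 : min |φ n (v - w)| 1 ≤ ‖v - w‖ := by
      refine (min_le_left _ _).trans ?_
      calc |φ n (v - w)| = ‖φ n (v - w)‖ := (Real.norm_eq_abs _).symm
        _ ≤ ‖φ n‖ * ‖v - w‖ := (φ n).le_opNorm _
        _ ≤ 1 * ‖v - w‖ := mul_le_mul_of_nonneg_right (hφ n) (norm_nonneg _)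
        _ = ‖v - w‖ := one_mul _
    nlinarith
  calc pdist φ v w ≤ ∑' n : ℕ, (1/2:ℝ)^n * ‖v - w‖ := by
        refine Summable.tsum_le_tsum h1 (pdist_summable φ v w) ?_
        exact (summable_geometric_of_lt_one (by norm_num) (by norm_num)).mul_right _
    _ = (∑' n : ℕ, (1/2:ℝ)^n) * ‖v - w‖ := tsum_mul_right
    _ = 2 * ‖v - w‖ := by rw [tsum_geometric_two]

/-- `min (a+b) 1 ≤ min a 1 + min b 1` for nonneg reals. -/
lemma aux_min_add' (a b : ℝ) (ha : 0 ≤ a) (hb : 0 ≤ b) :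
    min (a + b) 1 ≤ min a 1 + min b 1 := by
  rcases le_total a 1 with h1 | h1
  · rcases le_total b 1 with h2 | h2
    · rw [min_eq_left h1, min_eq_left h2]; exact min_le_left _ _
    · rw [min_eq_right h2]
      have : (0:ℝ) ≤ min a 1 := le_min ha zero_le_one
      nlinarith [min_le_right (a+b) 1]
  · rw [min_eq_right h1]
    have : (0:ℝ) ≤ min b 1 := le_min hb zero_le_one
    nlinarith [min_le_right (a+b) 1]

lemma pdist_triangle (φ : ℕ → X →L[ℝ] ℝ) (v y w : X) :
    pdist φ v w ≤ pdist φ v y + pdist φ y w := by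
  have key : ∀ n : ℕ, (1/2:ℝ)^n * min |φ n (v - w)| 1 ≤
      (1/2:ℝ)^n * min |φ n (v - y)| 1 + (1/2:ℝ)^n * min |φ n (y - w)| 1 := by
    intro n
    rw [← mul_add]
    have h2 : (0:ℝ) ≤ (1/2:ℝ)^n := by positivity
    have h3 : min |φ n (v - w)| 1 ≤ min |φ n (v - y)| 1 + min |φ n (y - w)| 1 := by
      calc min |φ n (v - w)| 1 ≤ min (|φ n (v - y)| + |φ n (y - w)|) 1 := by
            refine min_le_min ?_ le_rfl
            have h4 : φ n (v - w) = φ n (v - y) + φ n (y - w) := by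
              rw [map_sub, map_sub, map_sub]; ring
            rw [h4]; exact abs_add_le _ _
        _ ≤ _ := aux_min_add' _ _ (abs_nonneg _) (abs_nonneg _)
    nlinarith
  calc pdist φ v w
      ≤ ∑' n : ℕ, ((1/2:ℝ)^n * min |φ n (v - y)| 1 + (1/2:ℝ)^n * min |φ n (y - w)| 1) :=
        Summable.tsum_le_tsum key (pdist_summable φ v w)
          ((pdist_summable φ v y).add (pdist_summable φ y w))
    _ = pdist φ v y + pdist φ y w :=
        Summable.tsum_add (pdist_summable φ v y) (pdist_summable φ y w)

lemma coord_le_pdist (φ : ℕ → X →L[ℝ] ℝ) (v w : X) (n : ℕ) :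
    (1/2:ℝ)^n * min |φ n (v - w)| 1 ≤ pdist φ v w :=
  Summable.le_tsum (pdist_summable φ v w) n (fun m _ => pdist_term_nonneg φ v w m)

lemma pdist_tendsto_zero (φ : ℕ → X →L[ℝ] ℝ) (w : ℕ → X) (z : X)
    (hconv : ∀ n, Tendsto (fun i => φ n (w i)) atTop (𝓝 (φ n z))) :
    Tendsto (fun i => pdist φ (w i) z) atTop (𝓝 0) := by
  have h0 : Tendsto (fun i => ∑' n : ℕ, (1/2:ℝ)^n * min |φ n (w i - z)| 1) atTop
      (𝓝 (∑' _ : ℕ, (0:ℝ))) := by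
    apply tendsto_tsum_of_dominated_convergence
      (summable_geometric_of_lt_one (r := (1/2:ℝ)) (by norm_num) (by norm_num))
    · intro k
      have h1 : Tendsto (fun i => φ k (w i - z)) atTop (𝓝 0) := by
        have := (hconv k).sub (tendsto_const_nhds (x := φ k z))
        simpa [map_sub] using this
      have h2 : Tendsto (fun i => min |φ k (w i - z)| 1) atTop (𝓝 (min |(0:ℝ)| 1)) :=
        h1.abs.min tendsto_const_nhds
      have h3 := h2.const_mul ((1/2:ℝ)^k)
      simpa using h3
    · refine Filter.Eventually.of_forall (fun i k => ?_)
      rw [Real.norm_eq_abs, abs_of_nonneg (pdist_term_nonneg φ _ _ _)]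
      exact pdist_term_le φ _ _ _
  simpa [pdist] using h0

lemma pdist_eq_zero_coords (φ : ℕ → X →L[ℝ] ℝ) (v w : X) (h0 : pdist φ v w = 0) (n : ℕ) :
    φ n (v - w) = 0 := by
  have h1 : (1/2:ℝ)^n * min |φ n (v - w)| 1 ≤ 0 := h0 ▸ coord_le_pdist φ v w n
  have hp : (0:ℝ) < (1/2:ℝ)^n := by positivity
  have h2 : min |φ n (v - w)| 1 ≤ 0 := by nlinarith
  have h3 : |φ n (v - w)| ≤ 0 := by
    rcases min_cases |φ n (v - w)| 1 with ⟨he, _⟩ | ⟨he, hle⟩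
    · rwa [he] at h2
    · rw [he] at h2; linarith
  have := abs_nonneg (φ n (v - w))
  have : |φ n (v - w)| = 0 := le_antisymm h3 this
  exact abs_eq_zero.mp this

end PDist

end PDistX

section Sel

variable {X : Type*} [NormedAddCommGroup X] [NormedSpace ℝ X]

/-- Sets that are sequentially closed for coordinatewise `φ`-convergence within `W'`. -/
def SCpred (φ : ℕ → X →L[ℝ] ℝ) (W' : Set X) (C : Set X) : Prop :=
  C ⊆ W' ∧ ∀ (w : ℕ → X) (z : X), (∀ i, w i ∈ C) → z ∈ W' →
    (∀ n, Tendsto (fun i => φ n (w i)) atTop (𝓝 (φ n z))) → z ∈ C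

/-- The Kuratowski–Ryll-Nardzewski style shrinking multifunction. -/
noncomputable def selG (φ : ℕ → X →L[ℝ] ℝ) (W' : Set X) (D : ℝ) (c : ℕ → X) :
    ℕ → X → Set X
  | 0, x => {w | w ∈ W' ∧ ‖x - w‖ ≤ D}
  | (n+1), x =>
      selG φ W' D c n x ∩
      {w | pdist φ (c (sInf {j | ∃ w' ∈ selG φ W' D c n x, pdist φ (c j) w' < (1/2)^n})) w
        ≤ (1/2)^n}

/-- The index chosen at stage `n`. -/
noncomputable def selJ (φ : ℕ → X →L[ℝ] ℝ) (W' : Set X) (D : ℝ) (c : ℕ → X)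
    (n : ℕ) (x : X) : ℕ :=
  sInf {j | ∃ w' ∈ selG φ W' D c n x, pdist φ (c j) w' < (1/2)^n}

lemma selG_succ (φ : ℕ → X →L[ℝ] ℝ) (W' : Set X) (D : ℝ) (c : ℕ → X) (n : ℕ) (x : X) :
    selG φ W' D c (n+1) x = selG φ W' D c n x ∩
      {w | pdist φ (c (selJ φ W' D c n x)) w ≤ (1/2)^n} := rfl

lemma selG_subset (φ : ℕ → X →L[ℝ] ℝ) (W' : Set X) (D : ℝ) (c : ℕ → X) (n : ℕ) (x : X) :
    selG φ W' D c n x ⊆ {w | w ∈ W' ∧ ‖x - w‖ ≤ D} := by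
  induction n with
  | zero => exact subset_rfl
  | succ n ih => exact (Set.inter_subset_left).trans ih

lemma selG_mono (φ : ℕ → X →L[ℝ] ℝ) (W' : Set X) (D : ℝ) (c : ℕ → X) {m n : ℕ} (h : m ≤ n)
    (x : X) : selG φ W' D c n x ⊆ selG φ W' D c m x := by
  induction n with
  | zero => rw [Nat.le_zero.mp h]
  | succ n ih =>
    rcases Nat.lt_or_ge m (n+1) with h1 | h1
    · exact Set.inter_subset_left.trans (ih (Nat.lt_succ_iff.mp h1))
    · have : m = n + 1 := le_antisymm h h1
      rw [this]

/-- Characterisation of `sInf` of a set of naturals. -/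
lemma aux_sInf_eq' (S : Set ℕ) (j : ℕ) :
    sInf S = j ↔ ((j ∈ S ∨ (j = 0 ∧ ∀ i, i ∉ S)) ∧ ∀ i < j, i ∉ S) := by
  rcases eq_empty_or_nonempty S with hS | hS
  · subst hS
    constructor
    · rintro rfl
      exact ⟨Or.inr ⟨Nat.sInf_empty, fun i h => h⟩, fun i _ h => h⟩
    · rintro ⟨(h | ⟨rfl, _⟩), _⟩
      · exact absurd h (fun h => h)
      · exact Nat.sInf_empty
  · constructor
    · rintro rfl
      exact ⟨Or.inl (Nat.sInf_mem hS), fun i hi => Nat.notMem_of_lt_sInf hi⟩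
    · rintro ⟨(hj | ⟨rfl, hall⟩), hlt⟩
      · refine le_antisymm (Nat.sInf_le hj) ?_
        by_contra hcon
        push_neg at hcon
        exact hlt _ hcon (Nat.sInf_mem hS)
      · exact absurd (Nat.sInf_mem hS) (hall _)

variable {Ω : Type*} [MeasurableSpace Ω]

theorem aux_selection
    (φ : ℕ → X →L[ℝ] ℝ) (hφ : ∀ n, ‖φ n‖ ≤ 1)
    (W' : Set X) (hW'ne : W'.Nonempty) (hW'sep : TopologicalSpace.IsSeparable W')
    (S : Set X) (hS : IsClosed S)
    (D : ℝ)
    (H1 : ∀ w : ℕ → X, (∀ j, w j ∈ W') → ∃ z ∈ W', ∃ σ : ℕ → ℕ, StrictMono σ ∧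
      ∀ n, Tendsto (fun i => φ n (w (σ i))) atTop (𝓝 (φ n z)))
    (H2 : ∀ x ∈ S ∪ W', ∀ y ∈ W', ∀ r : ℝ, (∀ n, φ n (x - y) ≤ r) → ‖x - y‖ ≤ r)
    (f' : Ω → X) (hf' : StronglyMeasurable f') (hf'S : ∀ s, f' s ∈ S) :
    ∃ g : Ω → X, StronglyMeasurable g ∧ (∀ s, g s ∈ W') ∧
      ∀ s, (∃ w ∈ W', ‖f' s - w‖ ≤ D) → ‖f' s - g s‖ ≤ D := by
  classical
  borelize X
  have hf'm : Measurable f' := hf'.measurable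
  obtain ⟨w₀, hw₀⟩ := hW'ne
  -- a dense sequence in W'
  haveI : Nonempty ↥W' := ⟨⟨w₀, hw₀⟩⟩
  haveI := hW'sep.separableSpace
  set c : ℕ → X := fun j => (TopologicalSpace.denseSeq ↥W' j : X) with hcdef
  have hcW' : ∀ j, c j ∈ W' := fun j => (TopologicalSpace.denseSeq ↥W' j).2
  have hcdense : ∀ w ∈ W', ∀ ε : ℝ, 0 < ε → ∃ j, ‖c j - w‖ < ε := by
    intro w hw ε hε
    have hd := TopologicalSpace.denseRange_denseSeq ↥W'
    rw [Metric.denseRange_iff] at hd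
    obtain ⟨j, hj⟩ := hd ⟨w, hw⟩ ε hε
    refine ⟨j, ?_⟩
    have h2 : dist w (c j) < ε := hj
    rw [dist_eq_norm] at h2
    rw [norm_sub_rev]
    exact h2
  -- basic SC facts
  have hSC_W' : SCpred φ W' W' := ⟨subset_rfl, fun w z _ hz _ => hz⟩
  have hSC_dball : ∀ C, SCpred φ W' C → ∀ (v : X) (q : ℝ),
      SCpred φ W' (C ∩ {w | pdist φ v w ≤ q}) := by
    intro C hC v q
    refine ⟨Set.inter_subset_left.trans hC.1, ?_⟩
    intro w z hw hz hconv
    refine ⟨hC.2 w z (fun i => (hw i).1) hz hconv, ?_⟩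
    have hten : Tendsto (fun i => pdist φ (w i) z) atTop (𝓝 0) :=
      pdist_tendsto_zero φ w z hconv
    have hub : ∀ i, pdist φ v z ≤ q + pdist φ (w i) z := by
      intro i
      calc pdist φ v z ≤ pdist φ v (w i) + pdist φ (w i) z := pdist_triangle φ v (w i) z
        _ ≤ q + pdist φ (w i) z := add_le_add_left (hw i).2 _
    have hlim : Tendsto (fun i => q + pdist φ (w i) z) atTop (𝓝 (q + 0)) :=
      tendsto_const_nhds.add hten
    have := ge_of_tendsto hlim (Filter.Eventually.of_forall hub)
    simpa using this
  have hSC_nball : ∀ C, SCpred φ W' C → ∀ v ∈ W', ∀ q : ℝ,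
      SCpred φ W' (C ∩ {w | ‖w - v‖ ≤ q}) := by
    intro C hC v hv q
    refine ⟨Set.inter_subset_left.trans hC.1, ?_⟩
    intro w z hw hz hconv
    refine ⟨hC.2 w z (fun i => (hw i).1) hz hconv, ?_⟩
    refine H2 z (Or.inr hz) v hv q ?_
    intro n
    have h1 : Tendsto (fun i => φ n (w i - v)) atTop (𝓝 (φ n (z - v))) := by
      have := (hconv n).sub (tendsto_const_nhds (x := φ n v))
      simpa [map_sub] using this
    refine le_of_tendsto h1 (Filter.Eventually.of_forall fun i => ?_)
    calc φ n (w i - v) ≤ |φ n (w i - v)| := le_abs_self _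
      _ = ‖φ n (w i - v)‖ := (Real.norm_eq_abs _).symm
      _ ≤ ‖φ n‖ * ‖w i - v‖ := (φ n).le_opNorm _
      _ ≤ 1 * ‖w i - v‖ := mul_le_mul_of_nonneg_right (hφ n) (norm_nonneg _)
      _ = ‖w i - v‖ := one_mul _
      _ ≤ q := (hw i).2
  have hSC_B : ∀ x ∈ S, SCpred φ W' {w | w ∈ W' ∧ ‖x - w‖ ≤ D} := by
    intro x hx
    refine ⟨fun w hw => hw.1, ?_⟩
    intro w z hw hz hconv
    refine ⟨hz, ?_⟩
    refine H2 x (Or.inl hx) z hz D ?_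
    intro n
    have h1 : Tendsto (fun i => φ n (x - w i)) atTop (𝓝 (φ n (x - z))) := by
      have := (tendsto_const_nhds (x := φ n x)).sub (hconv n)
      simpa [map_sub] using this
    refine le_of_tendsto h1 (Filter.Eventually.of_forall fun i => ?_)
    calc φ n (x - w i) ≤ |φ n (x - w i)| := le_abs_self _
      _ = ‖φ n (x - w i)‖ := (Real.norm_eq_abs _).symm
      _ ≤ ‖φ n‖ * ‖x - w i‖ := (φ n).le_opNorm _
      _ ≤ 1 * ‖x - w i‖ := mul_le_mul_of_nonneg_right (hφ n) (norm_nonneg _)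
      _ = ‖x - w i‖ := one_mul _
      _ ≤ D := (hw i).2
  -- closedness of the base sets
  have hB_closed : ∀ C, SCpred φ W' C →
      IsClosed {x | x ∈ S ∧ ({w | w ∈ W' ∧ ‖x - w‖ ≤ D} ∩ C).Nonempty} := by
    intro C hC
    apply IsSeqClosed.isClosed
    intro xs x hxs hx
    have hxS : x ∈ S := hS.mem_of_tendsto hx (Filter.Eventually.of_forall fun n => (hxs n).1)
    choose w hw using fun n => (hxs n).2
    obtain ⟨z, hzW', σ, hσ, hconv⟩ := H1 w (fun n => (hw n).1.1)
    have hzC : z ∈ C := hC.2 (fun i => w (σ i)) z (fun i => (hw (σ i)).2) hzW' hconv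
    have hxz : ‖x - z‖ ≤ D := by
      refine H2 x (Or.inl hxS) z hzW' D ?_
      intro n
      have h1 : Tendsto (fun i => φ n (xs (σ i))) atTop (𝓝 (φ n x)) :=
        ((φ n).continuous.tendsto x).comp (hx.comp hσ.tendsto_atTop)
      have h2 : Tendsto (fun i => φ n (xs (σ i) - w (σ i))) atTop (𝓝 (φ n (x - z))) := by
        have := h1.sub (hconv n)
        simpa [map_sub] using this
      refine le_of_tendsto h2 (Filter.Eventually.of_forall fun i => ?_)
      calc φ n (xs (σ i) - w (σ i)) ≤ |φ n (xs (σ i) - w (σ i))| := le_abs_self _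
        _ = ‖φ n (xs (σ i) - w (σ i))‖ := (Real.norm_eq_abs _).symm
        _ ≤ ‖φ n‖ * ‖xs (σ i) - w (σ i)‖ := (φ n).le_opNorm _
        _ ≤ 1 * ‖xs (σ i) - w (σ i)‖ := mul_le_mul_of_nonneg_right (hφ n) (norm_nonneg _)
        _ = ‖xs (σ i) - w (σ i)‖ := one_mul _
        _ ≤ D := (hw (σ i)).1.2
    exact ⟨hxS, z, ⟨hzW', hxz⟩, hzC⟩
  -- SC property of the G n x
  have hG_SC : ∀ x ∈ S, ∀ n, SCpred φ W' (selG φ W' D c n x) := by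
    intro x hx n
    induction n with
    | zero => exact hSC_B x hx
    | succ n ih =>
      rw [selG_succ]
      exact hSC_dball _ ih _ _
  -- nonemptiness
  have hG_ne : ∀ x, ({w | w ∈ W' ∧ ‖x - w‖ ≤ D} : Set X).Nonempty →
      ∀ n, (selG φ W' D c n x).Nonempty := by
    intro x hne n
    induction n with
    | zero => exact hne
    | succ n ih =>
      obtain ⟨w, hw⟩ := ih
      have hwW' : w ∈ W' := (selG_subset φ W' D c n x hw).1
      have hpow : (0:ℝ) < (1/2:ℝ)^n := by positivity
      obtain ⟨j, hj⟩ := hcdense w hwW' ((1/2)^n/4) (by positivity)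
      have hjlt : pdist φ (c j) w < (1/2)^n := by
        have h2 := pdist_le φ hφ (c j) w
        nlinarith
      have hSne : {j | ∃ w' ∈ selG φ W' D c n x, pdist φ (c j) w' < (1/2)^n}.Nonempty :=
        ⟨j, w, hw, hjlt⟩
      obtain ⟨w', hw', hw'lt⟩ := Nat.sInf_mem hSne
      exact ⟨w', hw', le_of_lt hw'lt⟩
  -- diameter bound
  have hG_diam : ∀ n x (w w' : X), w ∈ selG φ W' D c (n+1) x → w' ∈ selG φ W' D c (n+1) x →
      pdist φ w w' ≤ 2 * (1/2)^n := by
    intro n x w w' hw hw'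
    rw [selG_succ] at hw hw'
    calc pdist φ w w' ≤ pdist φ w (c (selJ φ W' D c n x)) + pdist φ (c (selJ φ W' D c n x)) w' :=
          pdist_triangle _ _ _ _
      _ ≤ (1/2)^n + (1/2)^n := by
          refine add_le_add ?_ hw'.2
          rw [pdist_symm]
          exact hw.2
      _ = 2 * (1/2)^n := by ring
  -- the limit point
  have hzex : ∀ x, x ∈ S → ({w | w ∈ W' ∧ ‖x - w‖ ≤ D} : Set X).Nonempty →
      ∃ z, z ∈ W' ∧ ∀ n, z ∈ selG φ W' D c n x := by
    intro x hx hne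
    choose w hw using hG_ne x hne
    obtain ⟨z, hzW', σ, hσ, hconv⟩ := H1 w (fun n => (selG_subset φ W' D c n x (hw n)).1)
    refine ⟨z, hzW', fun m => ?_⟩
    refine (hG_SC x hx m).2 (fun i => w (σ (i + m))) z (fun i => ?_) hzW' (fun n => ?_)
    · refine selG_mono φ W' D c ?_ x (hw (σ (i + m)))
      calc m ≤ i + m := Nat.le_add_left m i
        _ ≤ σ (i + m) := hσ.le_apply
    · exact (hconv n).comp (tendsto_add_atTop_nat m)
  -- uniqueness of the limit point
  have huniq : ∀ (x z z' : X), z ∈ W' → z' ∈ W' → (∀ n, z ∈ selG φ W' D c n x) →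
      (∀ n, z' ∈ selG φ W' D c n x) → z = z' := by
    intro x z z' hz hz' hzn hz'n
    have hb : ∀ n : ℕ, pdist φ z z' ≤ 2 * (1/2)^n :=
      fun n => hG_diam n x z z' (hzn (n+1)) (hz'n (n+1))
    have hlim : Tendsto (fun n : ℕ => 2 * (1/2:ℝ)^n) atTop (𝓝 (2 * 0)) :=
      (tendsto_pow_atTop_nhds_zero_of_lt_one (by norm_num) (by norm_num)).const_mul 2
    have hle : pdist φ z z' ≤ 0 := by
      have := ge_of_tendsto hlim (Filter.Eventually.of_forall hb)
      simpa using this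
    have h0 : pdist φ z z' = 0 := le_antisymm hle (pdist_nonneg φ z z')
    have hcoords := pdist_eq_zero_coords φ z z' h0
    have : ‖z - z'‖ ≤ 0 := H2 z (Or.inr hz) z' hz' 0 (fun n => le_of_eq (hcoords n))
    have : ‖z - z'‖ = 0 := le_antisymm this (norm_nonneg _)
    have := norm_eq_zero.mp this
    exact sub_eq_zero.mp this
  -- measurability invariant
  have hMeas : ∀ n (C : Set X), SCpred φ W' C →
      MeasurableSet (f' ⁻¹' {x | (selG φ W' D c n x ∩ C).Nonempty}) := by
    intro n
    induction n with
    | zero =>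
      intro C hC
      have heq : f' ⁻¹' {x | (selG φ W' D c 0 x ∩ C).Nonempty} =
          f' ⁻¹' {x | x ∈ S ∧ ({w | w ∈ W' ∧ ‖x - w‖ ≤ D} ∩ C).Nonempty} := by
        ext s
        simp only [Set.mem_preimage, Set.mem_setOf_eq]
        exact ⟨fun h => ⟨hf'S s, h⟩, fun h => h.2⟩
      rw [heq]
      exact hf'm (hB_closed C hC).measurableSet
    | succ n ih =>
      intro C hC
      have hTj : ∀ j : ℕ, MeasurableSet
          (f' ⁻¹' {x | ∃ w ∈ selG φ W' D c n x, pdist φ (c j) w < (1/2)^n}) := by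
        intro j
        have hidq : {x | ∃ w ∈ selG φ W' D c n x, pdist φ (c j) w < (1/2)^n} =
            ⋃ (q : ℚ), ⋃ (_ : (q:ℝ) < (1/2)^n),
              {x | (selG φ W' D c n x ∩ (W' ∩ {w | pdist φ (c j) w ≤ (q:ℝ)})).Nonempty} := by
          ext x
          simp only [Set.mem_setOf_eq, Set.mem_iUnion]
          constructor
          · rintro ⟨w, hwG, hlt⟩
            obtain ⟨q, hq1, hq2⟩ := exists_rat_btwn hlt
            exact ⟨q, hq2, w, hwG, (selG_subset φ W' D c n x hwG).1, le_of_lt hq1⟩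
          · rintro ⟨q, hq, w, hwG, _, hle⟩
            exact ⟨w, hwG, lt_of_le_of_lt hle hq⟩
        rw [hidq]
        rw [Set.preimage_iUnion]
        refine MeasurableSet.iUnion fun q => ?_
        rw [Set.preimage_iUnion]
        refine MeasurableSet.iUnion fun _ => ?_
        exact ih _ (hSC_dball W' hSC_W' (c j) (q:ℝ))
      have hJj : ∀ j : ℕ, MeasurableSet (f' ⁻¹' {x | selJ φ W' D c n x = j}) := by
        intro j
        have hid : f' ⁻¹' {x | selJ φ W' D c n x = j} =
            ((f' ⁻¹' {x | ∃ w ∈ selG φ W' D c n x, pdist φ (c j) w < (1/2)^n}) ∪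
              ({s | j = 0} ∩ ⋂ i : ℕ,
                (f' ⁻¹' {x | ∃ w ∈ selG φ W' D c n x, pdist φ (c i) w < (1/2)^n})ᶜ)) ∩
            (⋂ i : ℕ, ⋂ (_ : i < j),
              (f' ⁻¹' {x | ∃ w ∈ selG φ W' D c n x, pdist φ (c i) w < (1/2)^n})ᶜ) := by
          ext s
          simp only [Set.mem_preimage, Set.mem_setOf_eq, Set.mem_inter_iff, Set.mem_union,
            Set.mem_iInter, Set.mem_compl_iff, selJ]
          rw [aux_sInf_eq']
          simp only [Set.mem_setOf_eq]
          try tauto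
        rw [hid]
        refine MeasurableSet.inter ?_ ?_
        · refine MeasurableSet.union (hTj j) ?_
          refine MeasurableSet.inter ?_ (MeasurableSet.iInter fun i => (hTj i).compl)
          exact MeasurableSet.const _
        · exact MeasurableSet.iInter fun i => MeasurableSet.iInter fun _ => (hTj i).compl
      have hid2 : f' ⁻¹' {x | (selG φ W' D c (n+1) x ∩ C).Nonempty} =
          ⋃ j : ℕ, (f' ⁻¹' {x | selJ φ W' D c n x = j} ∩
            f' ⁻¹' {x | (selG φ W' D c n x ∩
              (C ∩ {w | pdist φ (c j) w ≤ (1/2)^n})).Nonempty}) := by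
        ext s
        simp only [Set.mem_preimage, Set.mem_setOf_eq, Set.mem_iUnion, Set.mem_inter_iff]
        constructor
        · rintro ⟨w, hwG1, hwC⟩
          rw [selG_succ] at hwG1
          exact ⟨selJ φ W' D c n (f' s), rfl, w, hwG1.1, hwC, hwG1.2⟩
        · rintro ⟨j, hJ, w, hwGn, hwC, hball⟩
          refine ⟨w, ?_, hwC⟩
          rw [selG_succ]
          refine ⟨hwGn, ?_⟩
          rw [hJ]
          exact hball
      rw [hid2]
      refine MeasurableSet.iUnion fun j => (hJj j).inter ?_
      exact ih _ (hSC_dball C hC (c j) ((1/2)^n))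
  -- define the selector
  set g : Ω → X := fun s =>
    if h : ({w | w ∈ W' ∧ ‖f' s - w‖ ≤ D} : Set X).Nonempty
    then (hzex (f' s) (hf'S s) h).choose else w₀ with hgdef
  have hgz : ∀ s (h : ({w | w ∈ W' ∧ ‖f' s - w‖ ≤ D} : Set X).Nonempty),
      g s ∈ W' ∧ ∀ n, g s ∈ selG φ W' D c n (f' s) := by
    intro s h
    have : g s = (hzex (f' s) (hf'S s) h).choose := by
      rw [hgdef]; exact dif_pos h
    rw [this]
    exact (hzex (f' s) (hf'S s) h).choose_spec
  have hgW' : ∀ s, g s ∈ W' := by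
    intro s
    by_cases h : ({w | w ∈ W' ∧ ‖f' s - w‖ ≤ D} : Set X).Nonempty
    · exact (hgz s h).1
    · have : g s = w₀ := by rw [hgdef]; exact dif_neg h
      rw [this]; exact hw₀
  -- the characterisation of membership of `g s` in SC sets
  have hchar : ∀ s (h : ({w | w ∈ W' ∧ ‖f' s - w‖ ≤ D} : Set X).Nonempty) (A : Set X),
      SCpred φ W' A →
      (g s ∈ A ↔ ∀ m, (selG φ W' D c m (f' s) ∩ A).Nonempty) := by
    intro s h A hA
    constructor
    · intro hgA m
      exact ⟨g s, (hgz s h).2 m, hgA⟩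
    · intro hm
      choose w hw using hm
      obtain ⟨z, hzW', σ, hσ, hconv⟩ := H1 w (fun m => (selG_subset φ W' D c m _ (hw m).1).1)
      have hzA : z ∈ A := hA.2 (fun i => w (σ i)) z (fun i => (hw (σ i)).2) hzW' hconv
      have hzG : ∀ m, z ∈ selG φ W' D c m (f' s) := by
        intro m
        refine (hG_SC (f' s) (hf'S s) m).2 (fun i => w (σ (i + m))) z (fun i => ?_) hzW'
          (fun n => (hconv n).comp (tendsto_add_atTop_nat m))
        refine selG_mono φ W' D c ?_ _ (hw (σ (i + m))).1
        calc m ≤ i + m := Nat.le_add_left m i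
          _ ≤ σ (i + m) := hσ.le_apply
      have : z = g s := huniq (f' s) z (g s) hzW' (hgW' s) hzG (hgz s h).2
      rw [← this]
      exact hzA
  -- measurability of the nonemptiness set
  have hNEmeas : MeasurableSet {s | ({w | w ∈ W' ∧ ‖f' s - w‖ ≤ D} : Set X).Nonempty} := by
    have hid : {s | ({w | w ∈ W' ∧ ‖f' s - w‖ ≤ D} : Set X).Nonempty} =
        f' ⁻¹' {x | (selG φ W' D c 0 x ∩ W').Nonempty} := by
      ext s
      simp only [Set.mem_setOf_eq, Set.mem_preimage]
      constructor
      · rintro ⟨w, hw⟩; exact ⟨w, hw, hw.1⟩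
      · rintro ⟨w, hw, _⟩; exact ⟨w, hw⟩
    rw [hid]
    exact hMeas 0 W' hSC_W'
  -- measurability of g
  have hgmeas : Measurable g := by
    apply measurable_of_isOpen
    intro U hU
    have hid : g ⁻¹' U =
        ({s | ({w | w ∈ W' ∧ ‖f' s - w‖ ≤ D} : Set X).Nonempty}ᶜ ∩ {s | w₀ ∈ U}) ∪
        ({s | ({w | w ∈ W' ∧ ‖f' s - w‖ ≤ D} : Set X).Nonempty} ∩
          ⋃ (p : ℕ × ℚ), ⋃ (_ : 0 ≤ (p.2:ℝ) ∧ closedBall (c p.1) (p.2:ℝ) ⊆ U),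
            ⋂ m, f' ⁻¹' {x | (selG φ W' D c m x ∩
              (W' ∩ {w | ‖w - c p.1‖ ≤ (p.2:ℝ)})).Nonempty}) := by
      ext s
      simp only [Set.mem_preimage, Set.mem_union, Set.mem_inter_iff, Set.mem_compl_iff,
        Set.mem_setOf_eq, Set.mem_iUnion, Set.mem_iInter]
      constructor
      · intro hsU
        by_cases h : ({w | w ∈ W' ∧ ‖f' s - w‖ ≤ D} : Set X).Nonempty
        · right
          refine ⟨h, ?_⟩
          obtain ⟨ε, hε, hball⟩ := Metric.isOpen_iff.mp hU (g s) hsU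
          obtain ⟨q, hq0, hq3⟩ := exists_rat_btwn (show (0:ℝ) < ε/3 by linarith)
          obtain ⟨j, hj⟩ := hcdense (g s) (hgW' s) (q:ℝ) (by exact_mod_cast hq0)
          have hsub : closedBall (c j) (q:ℝ) ⊆ U := by
            intro y hy
            apply hball
            rw [Metric.mem_ball]
            rw [Metric.mem_closedBall] at hy
            have h2 : dist y (g s) ≤ dist y (c j) + dist (c j) (g s) := dist_triangle _ _ _
            have h3 : dist (c j) (g s) < (q:ℝ) := by
              rw [dist_eq_norm]; exact hj
            calc dist y (g s) ≤ dist y (c j) + dist (c j) (g s) := h2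
              _ < (q:ℝ) + (q:ℝ) := by
                  apply add_lt_add_of_le_of_lt hy h3
              _ < ε := by
                  have : (q:ℝ) < ε/3 := hq3
                  linarith
          refine ⟨(j, q), ⟨le_of_lt (by exact_mod_cast hq0), hsub⟩, ?_⟩
          intro m
          have hA : SCpred φ W' (W' ∩ {w | ‖w - c j‖ ≤ (q:ℝ)}) :=
            hSC_nball W' hSC_W' (c j) (hcW' j) (q:ℝ)
          have := (hchar s h _ hA).mp ⟨hgW' s, by show ‖g s - c j‖ ≤ (q:ℝ); rw [norm_sub_rev]; exact le_of_lt hj⟩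
          exact this m
        · left
          refine ⟨h, ?_⟩
          have : g s = w₀ := by rw [hgdef]; exact dif_neg h
          rwa [this] at hsU
      · rintro (⟨h, hw₀U⟩ | ⟨h, p, ⟨hq0, hsub⟩, hm⟩)
        · have : g s = w₀ := by rw [hgdef]; exact dif_neg h
          rwa [this]
        · have hA : SCpred φ W' (W' ∩ {w | ‖w - c p.1‖ ≤ (p.2:ℝ)}) :=
            hSC_nball W' hSC_W' (c p.1) (hcW' p.1) (p.2:ℝ)
          have hgA := (hchar s h _ hA).mpr hm
          apply hsub
          rw [Metric.mem_closedBall, dist_eq_norm]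
          exact hgA.2
    rw [hid]
    refine MeasurableSet.union (hNEmeas.compl.inter (MeasurableSet.const _)) ?_
    refine hNEmeas.inter ?_
    refine MeasurableSet.iUnion fun p => ?_
    refine MeasurableSet.iUnion fun _ => ?_
    refine MeasurableSet.iInter fun m => ?_
    exact hMeas m _ (hSC_nball W' hSC_W' (c p.1) (hcW' p.1) (p.2:ℝ))
  -- strong measurability
  have hgsm : StronglyMeasurable g := by
    rw [stronglyMeasurable_iff_measurable_separable]
    exact ⟨hgmeas, hW'sep.mono (Set.range_subset_iff.2 hgW')⟩
  refine ⟨g, hgsm, hgW', ?_⟩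
  intro s hs
  obtain ⟨w, hwW', hwD⟩ := hs
  have h : ({w | w ∈ W' ∧ ‖f' s - w‖ ≤ D} : Set X).Nonempty := ⟨w, hwW', hwD⟩
  exact ((hgz s h).2 0).2

end Sel

open MeasureTheory Filter

/-- For a weakly compact subset `W` of a real Banach space `X`, the set
`L_∞(μ,W)` is proximinal in `L_∞(μ,X)`. -/
theorem linf_weakly_compact_proximinal
    {X : Type*} [NormedAddCommGroup X] [NormedSpace ℝ X] [CompleteSpace X]
    {Ω : Type*} [MeasurableSpace Ω] (μ : Measure Ω)
    [IsProbabilityMeasure μ] [μ.IsComplete]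
    (W : Set X) (hW_ne : W.Nonempty)
    (hW : IsCompact (toWeakSpace ℝ X '' W))
    (f : Ω → X) (hf : MemLp f ⊤ μ) :
    ∃ g₀ : Ω → X, MemLp g₀ ⊤ μ ∧ (∀ᵐ s ∂μ, g₀ s ∈ W) ∧
      ∀ h : Ω → X, MemLp h ⊤ μ → (∀ᵐ s ∂μ, h s ∈ W) →
        (eLpNorm (f - g₀) ⊤ μ).toReal ≤ (eLpNorm (f - h) ⊤ μ).toReal := by
  classical
  have hΩ : Nonempty Ω := by
    by_contra hemp
    rw [not_nonempty_iff] at hemp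
    have h1 : (1:ℝ≥0∞) = 0 := by
      rw [← measure_univ (μ := μ), Set.univ_eq_empty_iff.mpr hemp, measure_empty]
    exact one_ne_zero h1
  -- strongly measurable version of f
  set f' : Ω → X := hf.1.mk f with hf'def
  have hf'sm : StronglyMeasurable f' := hf.1.stronglyMeasurable_mk
  have hff' : f =ᵐ[μ] f' := hf.1.ae_eq_mk
  -- separable closed superset of the range
  set S : Set X := closure (Set.range f') with hSdef
  have hSclosed : IsClosed S := isClosed_closure
  have hSsep : TopologicalSpace.IsSeparable S := hf'sm.isSeparable_range.closure
  have hf'S : ∀ s, f' s ∈ S := fun s => subset_closure ⟨s, rfl⟩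
  -- dense sequence in S
  haveI : Nonempty ↥S := ⟨⟨_, hf'S hΩ.some⟩⟩
  haveI := hSsep.separableSpace
  set xk : ℕ → X := fun k => (TopologicalSpace.denseSeq ↥S k : X) with hxkdef
  have hxkdense : ∀ x ∈ S, ∀ ε : ℝ, 0 < ε → ∃ k, dist x (xk k) < ε := by
    intro x hx ε hε
    have hd := TopologicalSpace.denseRange_denseSeq ↥S
    rw [Metric.denseRange_iff] at hd
    obtain ⟨k, hk⟩ := hd ⟨x, hx⟩ ε hε
    exact ⟨k, hk⟩
  obtain ⟨w₀, hw₀W⟩ := hW_ne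
  -- near-best approximations from W to the dense sequence
  have hwkm : ∀ k m : ℕ, ∃ w ∈ W,
      dist (xk k) w < Metric.infDist (xk k) W + 1/(m+1) := by
    intro k m
    apply (Metric.infDist_lt_iff ⟨w₀, hw₀W⟩).mp
    have : (0:ℝ) < 1/(m+1) := by positivity
    linarith
  choose wkm hwkmW hwkmlt using hwkm
  -- the countable set C and the separable closed convex set VC
  set Cset : Set X := Set.range (Function.uncurry wkm) ∪ {w₀} with hCdef
  have hCcount : Cset.Countable := (Set.countable_range _).union (Set.countable_singleton _)
  have hCsubW : Cset ⊆ W := by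
    rintro x (⟨⟨k, m⟩, rfl⟩ | rfl)
    · exact hwkmW k m
    · exact hw₀W
  set VC : Set X := closure (convexHull ℝ Cset) with hVCdef
  have hVCconv : Convex ℝ VC := (convex_convexHull ℝ Cset).closure
  have hVCclosed : IsClosed VC := isClosed_closure
  have hVCsep : TopologicalSpace.IsSeparable VC := (aux_isSeparable_convexHull hCcount).closure
  have hCsubVC : Cset ⊆ VC := (subset_convexHull ℝ Cset).trans subset_closure
  -- W' = W ∩ VC
  set W' : Set X := W ∩ VC with hW'def
  have hW'ne : W'.Nonempty := ⟨w₀, hw₀W, hCsubVC (Or.inr rfl)⟩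
  have hW'sep : TopologicalSpace.IsSeparable W' := hVCsep.mono Set.inter_subset_right
  have hW'subW : W' ⊆ W := Set.inter_subset_left
  have hW'subVC : W' ⊆ VC := Set.inter_subset_right
  have hwkmW' : ∀ k m, wkm k m ∈ W' :=
    fun k m => ⟨hwkmW k m, hCsubVC (Or.inl ⟨(k, m), rfl⟩)⟩
  -- weak compactness of W'
  have hW'cpt : IsCompact (toWeakSpace ℝ X '' W') := by
    have h1 : toWeakSpace ℝ X '' W' = (toWeakSpace ℝ X '' W) ∩ (toWeakSpace ℝ X '' VC) := by
      rw [hW'def, Set.image_inter (toWeakSpace ℝ X).injective]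
    rw [h1]
    exact hW.inter_right (aux_isClosed_weak_of_convex hVCconv hVCclosed)
  -- the set of relevant differences and its dense sequence
  set Pset : Set X := (fun p : X × X => p.1 - p.2) '' ((S ∪ VC) ×ˢ (S ∪ VC)) with hPdef
  have hPsep : TopologicalSpace.IsSeparable Pset :=
    ((hSsep.union hVCsep).prod (hSsep.union hVCsep)).image
      (continuous_fst.sub continuous_snd)
  have hPmem : ∀ x ∈ S ∪ VC, ∀ y ∈ S ∪ VC, x - y ∈ Pset := by
    intro x hx y hy
    exact ⟨(x, y), Set.mk_mem_prod hx hy, rfl⟩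
  haveI : Nonempty ↥Pset :=
    ⟨⟨_, hPmem _ (Or.inl (hf'S hΩ.some)) _ (Or.inl (hf'S hΩ.some))⟩⟩
  haveI := hPsep.separableSpace
  set u : ℕ → X := fun n => (TopologicalSpace.denseSeq ↥Pset n : X) with hudef
  have hudense : ∀ v ∈ Pset, ∀ ε : ℝ, 0 < ε → ∃ n, ‖u n - v‖ < ε := by
    intro v hv ε hε
    have hd := TopologicalSpace.denseRange_denseSeq ↥Pset
    rw [Metric.denseRange_iff] at hd
    obtain ⟨n, hn⟩ := hd ⟨v, hv⟩ ε hε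
    refine ⟨n, ?_⟩
    have h2 : dist v (u n) < ε := hn
    rw [dist_eq_norm] at h2
    rw [norm_sub_rev]
    exact h2
  -- norming functionals
  have hφ0 : ∀ n : ℕ, ∃ gn : X →L[ℝ] ℝ, ‖gn‖ ≤ 1 ∧ gn (u n) = ‖u n‖ :=
    fun n => exists_dual_vector'' ℝ (u n)
  choose φ hφ1 hφ2 using hφ0
  have hnorming : ∀ v ∈ Pset, ∀ r : ℝ, (∀ n, φ n v ≤ r) → ‖v‖ ≤ r := by
    intro v hv r hr
    by_contra hcon
    push_neg at hcon
    set ε : ℝ := (‖v‖ - r)/3 with hεdef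
    have hε : 0 < ε := by rw [hεdef]; linarith
    obtain ⟨n, hn⟩ := hudense v hv ε hε
    have h1 : ‖v‖ - ‖u n‖ ≤ ‖v - u n‖ := norm_sub_norm_le _ _
    have h1' : ‖v - u n‖ = ‖u n - v‖ := norm_sub_rev _ _
    have h2 : φ n (u n) = ‖u n‖ := hφ2 n
    have h3 : φ n (u n) - φ n v = φ n (u n - v) := by rw [map_sub]
    have h4 : φ n (u n - v) ≤ ‖u n - v‖ := by
      calc φ n (u n - v) ≤ |φ n (u n - v)| := le_abs_self _
        _ = ‖φ n (u n - v)‖ := (Real.norm_eq_abs _).symm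
        _ ≤ ‖φ n‖ * ‖u n - v‖ := (φ n).le_opNorm _
        _ ≤ 1 * ‖u n - v‖ := mul_le_mul_of_nonneg_right (hφ1 n) (norm_nonneg _)
        _ = ‖u n - v‖ := one_mul _
    have h5 : φ n v ≤ r := hr n
    -- ‖v‖ ≤ ‖u n‖ + ‖u n − v‖ = φ n (u n) + ... ≤ φ n v + 2 ‖u n − v‖ ≤ r + 2ε
    have : ‖v‖ ≤ r + 2*ε := by
      have := h1
      rw [h1'] at this
      linarith
    rw [hεdef] at this
    linarith
  have H2 : ∀ x ∈ S ∪ W', ∀ y ∈ W', ∀ r : ℝ, (∀ n, φ n (x - y) ≤ r) → ‖x - y‖ ≤ r := by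
    intro x hx y hy r hr
    refine hnorming _ ?_ r hr
    refine hPmem x ?_ y (Or.inr (hW'subVC hy))
    rcases hx with hx | hx
    · exact Or.inl hx
    · exact Or.inr (hW'subVC hx)
  -- weak continuity of the functionals
  have hψcont : ∀ ξ : X →L[ℝ] ℝ,
      Continuous fun z : WeakSpace ℝ X => ξ ((toWeakSpace ℝ X).symm z) :=
    fun ξ => WeakBilin.eval_continuous _ ξ
  -- H1: sequential compactness in coordinates
  have H1 : ∀ w : ℕ → X, (∀ j, w j ∈ W') → ∃ z ∈ W', ∃ σ : ℕ → ℕ, StrictMono σ ∧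
      ∀ n, Tendsto (fun i => φ n (w (σ i))) atTop (𝓝 (φ n z)) := by
    intro w hw
    have hMn : ∀ n : ℕ, ∃ M : ℝ, ∀ v ∈ W', |φ n v| ≤ M := by
      intro n
      have hcpt : IsCompact ((fun z : WeakSpace ℝ X => φ n ((toWeakSpace ℝ X).symm z)) ''
          (toWeakSpace ℝ X '' W')) := hW'cpt.image (hψcont (φ n))
      obtain ⟨M, hM⟩ := isBounded_iff_forall_norm_le.mp hcpt.isBounded
      refine ⟨M, fun v hv => ?_⟩
      have hvmem : φ n v ∈ (fun z : WeakSpace ℝ X => φ n ((toWeakSpace ℝ X).symm z)) ''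
          (toWeakSpace ℝ X '' W') := by
        exact ⟨toWeakSpace ℝ X v, ⟨v, hv, rfl⟩, by simp⟩
      have := hM _ hvmem
      rwa [Real.norm_eq_abs] at this
    choose M hM using hMn
    have hQcpt : IsCompact (Set.univ.pi fun n : ℕ => Set.Icc (-(M n)) (M n)) :=
      isCompact_univ_pi fun n => isCompact_Icc
    have hmem : ∀ j, (fun n => φ n (w j)) ∈ Set.univ.pi fun n : ℕ => Set.Icc (-(M n)) (M n) := by
      intro j
      rw [Set.mem_univ_pi]
      intro n
      have h2 := hM n (w j) (hw j)
      rw [Set.mem_Icc]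
      constructor
      · linarith [neg_abs_le (φ n (w j))]
      · linarith [le_abs_self (φ n (w j))]
    obtain ⟨L, _, σ, hσ, hLtend⟩ := hQcpt.isSeqCompact hmem
    have hfle : Filter.map (fun i => toWeakSpace ℝ X (w (σ i))) atTop ≤
        Filter.principal (toWeakSpace ℝ X '' W') := by
      rw [Filter.le_principal_iff, Filter.mem_map]
      exact Filter.Eventually.of_forall fun i => ⟨w (σ i), hw (σ i), rfl⟩
    obtain ⟨y, hyW', hclus⟩ := hW'cpt.exists_clusterPt hfle
    obtain ⟨z, hzW', rfl⟩ := hyW'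
    refine ⟨z, hzW', σ, hσ, fun n => ?_⟩
    have htnd : Tendsto (fun i => φ n (w (σ i))) atTop (𝓝 (L n)) :=
      (tendsto_pi_nhds.mp hLtend) n
    have hmap := hclus.map ((hψcont (φ n)).continuousAt) Filter.tendsto_map
    rw [Filter.map_map] at hmap
    have h1 : ClusterPt (φ n z) (Filter.map (fun i => φ n (w (σ i))) atTop) := by
      have heq1 : ((fun z : WeakSpace ℝ X => φ n ((toWeakSpace ℝ X).symm z)) ∘
          fun i => toWeakSpace ℝ X (w (σ i))) = fun i => φ n (w (σ i)) := by
        funext i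
        simp [LinearEquiv.symm_apply_apply]
      rw [heq1] at hmap
      rwa [LinearEquiv.symm_apply_apply] at hmap
    have h2 : Filter.map (fun i => φ n (w (σ i))) atTop ≤ 𝓝 (L n) := htnd
    have heq : φ n z = L n := eq_of_nhds_neBot (h1.mono h2)
    rw [heq]
    exact htnd
  -- the distance level D
  set dE : ℝ≥0∞ := essSup (fun s => ENNReal.ofReal (Metric.infDist (f' s) W)) μ with hdEdef
  have hf'top : eLpNormEssSup f' μ ≠ ⊤ := by
    have h1 : eLpNorm f ⊤ μ = eLpNorm f' ⊤ μ := eLpNorm_congr_ae hff'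
    have h2 : eLpNorm f' ⊤ μ = eLpNormEssSup f' μ := eLpNorm_exponent_top
    rw [← h2, ← h1]
    exact hf.2.ne
  have hdEtop : dE ≠ ⊤ := by
    have hb : ∀ᵐ s ∂μ, ENNReal.ofReal (Metric.infDist (f' s) W) ≤
        eLpNormEssSup f' μ + ENNReal.ofReal ‖w₀‖ := by
      filter_upwards [ENNReal.ae_le_essSup (fun s => (‖f' s‖₊ : ℝ≥0∞))] with s hs
      have h1 : Metric.infDist (f' s) W ≤ ‖f' s‖ + ‖w₀‖ := by
        calc Metric.infDist (f' s) W ≤ dist (f' s) w₀ := Metric.infDist_le_dist_of_mem hw₀W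
          _ ≤ ‖f' s‖ + ‖w₀‖ := by rw [dist_eq_norm]; exact norm_sub_le _ _
      calc ENNReal.ofReal (Metric.infDist (f' s) W) ≤ ENNReal.ofReal (‖f' s‖ + ‖w₀‖) :=
            ENNReal.ofReal_le_ofReal h1
        _ ≤ ENNReal.ofReal ‖f' s‖ + ENNReal.ofReal ‖w₀‖ := ENNReal.ofReal_add_le
        _ ≤ eLpNormEssSup f' μ + ENNReal.ofReal ‖w₀‖ := by
            refine add_le_add_left ?_ _
            rw [ofReal_norm]
            exact hs
    have := essSup_le_of_ae_le _ hb
    refine ne_top_of_le_ne_top ?_ this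
    exact (ENNReal.add_lt_top.mpr ⟨lt_top_iff_ne_top.mpr hf'top, ENNReal.ofReal_lt_top⟩).ne
  set D : ℝ := dE.toReal with hDdef
  have hDae : ∀ᵐ s ∂μ, Metric.infDist (f' s) W ≤ D := by
    filter_upwards [ENNReal.ae_le_essSup (fun s => ENNReal.ofReal (Metric.infDist (f' s) W))] with s hs
    have h2 := ENNReal.toReal_mono hdEtop hs
    rwa [ENNReal.toReal_ofReal Metric.infDist_nonneg] at h2
  -- infDist to W' is no larger than infDist to W, on S
  have hinfW' : ∀ x ∈ S, Metric.infDist x W' ≤ Metric.infDist x W := by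
    intro x hx
    by_contra hcon
    push_neg at hcon
    set ε : ℝ := (Metric.infDist x W' - Metric.infDist x W)/3 with hεdef
    have hε : 0 < ε := by rw [hεdef]; linarith
    obtain ⟨k, hk⟩ := hxkdense x hx (ε/2) (by linarith)
    obtain ⟨m, hm⟩ := exists_nat_one_div_lt (show (0:ℝ) < ε/2 by linarith)
    have h1 : dist (xk k) (wkm k m) < Metric.infDist (xk k) W + 1/(m+1) := hwkmlt k m
    have h2 : Metric.infDist (xk k) W ≤ Metric.infDist x W + dist (xk k) x :=
      Metric.infDist_le_infDist_add_dist
    have h3 : Metric.infDist x W' ≤ dist x (wkm k m) :=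
      Metric.infDist_le_dist_of_mem (hwkmW' k m)
    have h4 : dist x (wkm k m) ≤ dist x (xk k) + dist (xk k) (wkm k m) := dist_triangle _ _ _
    have h5 : dist (xk k) x = dist x (xk k) := dist_comm _ _
    have h6 : (1:ℝ)/(m+1) < ε/2 := hm
    linarith
  -- attainment: some point of W' within distance D
  have hBne : ∀ x ∈ S, Metric.infDist x W' ≤ D → ∃ w ∈ W', ‖x - w‖ ≤ D := by
    intro x hx hle
    have hseq : ∀ j : ℕ, ∃ w ∈ W', dist x w < D + 1/(j+1) := by
      intro j
      apply (Metric.infDist_lt_iff hW'ne).mp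
      have : (0:ℝ) < 1/(j+1) := by positivity
      linarith
    choose w hwW' hwlt using hseq
    obtain ⟨z, hzW', σ, hσ, hconv⟩ := H1 w hwW'
    refine ⟨z, hzW', ?_⟩
    refine H2 x (Or.inl hx) z hzW' D ?_
    intro n
    have h1 : Tendsto (fun i => φ n (x - w (σ i))) atTop (𝓝 (φ n (x - z))) := by
      have := (tendsto_const_nhds (x := φ n x)).sub (hconv n)
      simpa [map_sub] using this
    have h2 : Tendsto (fun i : ℕ => D + 1/((i:ℝ)+1)) atTop (𝓝 (D + 0)) :=
      tendsto_const_nhds.add tendsto_one_div_add_atTop_nhds_zero_nat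
    have h3 : φ n (x - z) ≤ D + 0 := by
      refine le_of_tendsto_of_tendsto h1 h2 ?_
      refine Filter.Eventually.of_forall fun i => ?_
      have hb1 : φ n (x - w (σ i)) ≤ ‖x - w (σ i)‖ := by
        calc φ n (x - w (σ i)) ≤ |φ n (x - w (σ i))| := le_abs_self _
          _ = ‖φ n (x - w (σ i))‖ := (Real.norm_eq_abs _).symm
          _ ≤ ‖φ n‖ * ‖x - w (σ i)‖ := (φ n).le_opNorm _
          _ ≤ 1 * ‖x - w (σ i)‖ := mul_le_mul_of_nonneg_right (hφ1 n) (norm_nonneg _)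
          _ = ‖x - w (σ i)‖ := one_mul _
      have hb2 : ‖x - w (σ i)‖ < D + 1/((σ i : ℝ)+1) := by
        rw [← dist_eq_norm]
        exact hwlt (σ i)
      have hb3 : (1:ℝ)/((σ i : ℝ)+1) ≤ 1/((i:ℝ)+1) := by
        apply one_div_le_one_div_of_le
        · positivity
        · have : (i:ℝ) ≤ (σ i : ℝ) := by exact_mod_cast hσ.le_apply
          linarith
      calc φ n (x - w (σ i)) ≤ ‖x - w (σ i)‖ := hb1
        _ ≤ D + 1/((σ i : ℝ)+1) := le_of_lt hb2
        _ ≤ D + 1/((i:ℝ)+1) := by linarith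
    simpa using h3
  -- apply the selection theorem
  obtain ⟨g, hgsm, hgW', hgD⟩ := aux_selection φ hφ1 W' hW'ne hW'sep S hSclosed D H1 H2
    f' hf'sm hf'S
  have hPae : ∀ᵐ s ∂μ, ∃ w ∈ W', ‖f' s - w‖ ≤ D := by
    filter_upwards [hDae] with s hs
    exact hBne (f' s) (hf'S s) ((hinfW' (f' s) (hf'S s)).trans hs)
  have hgDae : ∀ᵐ s ∂μ, ‖f' s - g s‖ ≤ D := hPae.mono fun s hs => hgD s hs
  refine ⟨g, ?_, ?_, ?_⟩
  · -- MemLp g ⊤ μ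
    set K : ℝ := (eLpNormEssSup f' μ).toReal with hKdef
    have hKae : ∀ᵐ s ∂μ, ‖f' s‖ ≤ K := by
      filter_upwards [ENNReal.ae_le_essSup (fun s => (‖f' s‖₊ : ℝ≥0∞))] with s hs
      have h2 := ENNReal.toReal_mono hf'top hs
      rwa [ENNReal.coe_toReal, coe_nnnorm] at h2
    refine memLp_top_of_bound hgsm.aestronglyMeasurable (K + D) ?_
    filter_upwards [hgDae, hKae] with s h1 h2
    calc ‖g s‖ = ‖f' s - (f' s - g s)‖ := by congr 1; abel
      _ ≤ ‖f' s‖ + ‖f' s - g s‖ := norm_sub_le _ _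
      _ ≤ K + D := add_le_add h2 h1
  · exact Filter.Eventually.of_forall fun s => hW'subW (hgW' s)
  · intro h hh hhW
    have hfh : MemLp (f - h) ⊤ μ := hf.sub hh
    refine ENNReal.toReal_mono hfh.eLpNorm_ne_top ?_
    have hL : eLpNorm (f - g) ⊤ μ ≤ dE := by
      rw [eLpNorm_exponent_top]
      have hDof : ENNReal.ofReal D = dE := ENNReal.ofReal_toReal hdEtop
      rw [← hDof]
      refine eLpNormEssSup_le_of_ae_bound ?_
      filter_upwards [hgDae, hff'] with s h1 h2
      have h3 : (f - g) s = f' s - g s := by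
        simp only [Pi.sub_apply]
        rw [h2]
      rw [h3]
      exact h1
    have hR : dE ≤ eLpNorm (f - h) ⊤ μ := by
      rw [eLpNorm_exponent_top, eLpNormEssSup]
      refine essSup_mono_ae ?_
      filter_upwards [hhW, hff'] with s h1 h2
      have h3 : Metric.infDist (f' s) W ≤ dist (f' s) (h s) :=
        Metric.infDist_le_dist_of_mem h1
      calc ENNReal.ofReal (Metric.infDist (f' s) W)
          ≤ ENNReal.ofReal (dist (f' s) (h s)) := ENNReal.ofReal_le_ofReal h3
        _ = (‖(f - h) s‖₊ : ℝ≥0∞) := by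
            rw [dist_eq_norm, ofReal_norm, ← enorm_eq_nnnorm]
            congr 1
            simp only [Pi.sub_apply]
            rw [h2]
    exact hL.trans hR
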